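/- Let A be an exact category (extension-closed full subcategory of an abelian category) and let 0 → X → Y → Z → 0 be an almost split sequence δ. If φ : Ext¹(Z, X) → I is an R-linear form with φ(δ) ≠ 0, then for every object L the bilinear form Hom_{Ā}(L, X) × Ext¹(Z, L) → I, (f̄, η) ↦ φ(f·η), is non-degenerate, where Ā is the injectively stable category. -/

import Mathlib

open CategoryTheory CategoryTheory.Limits

attribute [local instance] CategoryTheory.Abelian.hasFiniteBiproducts

universe v u

namespace AlmostSplit

variable (R : Type v) [CommRing R]
variable {C : Type u} [Category.{v} C] [Abelian C]

/-- `P` is an extension-closed (full, replete) subcategory predicate, i.e. an exact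
subcategory of the abelian category `C`. -/
def ExtClosed (P : C → Prop) : Prop :=
  ∀ ⦃X Y Z : C⦄ (f : X ⟶ Y) (g : Y ⟶ Z) (w : f ≫ g = 0),
    (ShortComplex.mk f g w).ShortExact → P X → P Z → P Y

/-- `f` is a proper (admissible) monomorphism of the exact subcategory `P`:
it fits into a short exact sequence whose cokernel term lies in `P`. -/
def AdmMono (P : C → Prop) {X Y : C} (f : X ⟶ Y) : Prop :=
  ∃ (Z : C) (g : Y ⟶ Z) (w : f ≫ g = 0), (ShortComplex.mk f g w).ShortExact ∧ P Z

/-- `g` is a proper (admissible) epimorphism of the exact subcategory `P`. -/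
def AdmEpi (P : C → Prop) {Y Z : C} (g : Y ⟶ Z) : Prop :=
  ∃ (X : C) (f : X ⟶ Y) (w : f ≫ g = 0), (ShortComplex.mk f g w).ShortExact ∧ P X

/-- `u : X ⟶ Y` is injectively trivial: it factors through every proper monomorphism
out of `X` (with target in the subcategory). -/
def ITriv (P : C → Prop) {X Y : C} (u : X ⟶ Y) : Prop :=
  ∀ ⦃M : C⦄ (v : X ⟶ M), P M → AdmMono P v → ∃ w : M ⟶ Y, v ≫ w = u

/-- `u : X ⟶ Y` is projectively trivial: it factors through every proper epimorphism
onto `Y` (with source in the subcategory). -/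
def PTriv (P : C → Prop) {X Y : C} (u : X ⟶ Y) : Prop :=
  ∀ ⦃M : C⦄ (v : M ⟶ Y), P M → AdmEpi P v → ∃ w : X ⟶ M, w ≫ v = u

def IsSection {X Y : C} (f : X ⟶ Y) : Prop := ∃ r : Y ⟶ X, f ≫ r = 𝟙 X

def IsRetraction {Y Z : C} (g : Y ⟶ Z) : Prop := ∃ s : Z ⟶ Y, s ≫ g = 𝟙 Z

def LeftAlmostSplit (P : C → Prop) {X Y : C} (f : X ⟶ Y) : Prop :=
  ¬ IsSection f ∧ ∀ ⦃M : C⦄, P M → ∀ u : X ⟶ M, ¬ IsSection u → ∃ h : Y ⟶ M, f ≫ h = u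

def RightAlmostSplit (P : C → Prop) {Y Z : C} (g : Y ⟶ Z) : Prop :=
  ¬ IsRetraction g ∧ ∀ ⦃M : C⦄, P M → ∀ u : M ⟶ Z, ¬ IsRetraction u → ∃ h : M ⟶ Y, h ≫ g = u

/-- `0 → X –f→ Y –g→ Z → 0` is an almost split sequence of the exact subcategory `P`:
`f` is minimal left almost split and `g` is minimal right almost split. -/
def AlmostSplitSeq (P : C → Prop) {X Y Z : C} (f : X ⟶ Y) (g : Y ⟶ Z) : Prop :=
  LeftAlmostSplit P f ∧ (∀ h : Y ⟶ Y, f ≫ h = f → IsIso h) ∧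
    RightAlmostSplit P g ∧ (∀ h : Y ⟶ Y, h ≫ g = g → IsIso h)

/-- `Z` is Ext-projective in the exact subcategory `P`: every proper epimorphism
(of the subcategory) onto `Z` is a retraction. -/
def ExtProjective (P : C → Prop) (Z : C) : Prop :=
  ∀ ⦃X Y : C⦄ (f : X ⟶ Y) (g : Y ⟶ Z) (w : f ≫ g = 0),
    (ShortComplex.mk f g w).ShortExact → P X → P Y → IsRetraction g

/-- `X` is Ext-injective in the exact subcategory `P`. -/
def ExtInjective (P : C → Prop) (X : C) : Prop :=
  ∀ ⦃Y Z : C⦄ (f : X ⟶ Y) (g : Y ⟶ Z) (w : f ≫ g = 0),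
    (ShortComplex.mk f g w).ShortExact → P Y → P Z → IsSection f

/-- An object is indecomposable. -/
def Indec (X : C) : Prop :=
  ¬ IsZero X ∧ ∀ (A B : C), (X ≅ A ⊞ B) → (IsZero A ∨ IsZero B)

section Linear

variable [Linear R C]

/-- The injectively trivial morphisms form an `R`-submodule of `Hom(X, Y)`. -/
def ITrivSub (P : C → Prop) (X Y : C) : Submodule R (X ⟶ Y) where
  carrier := {u | ITriv P u}
  add_mem' := by
    intro a b ha hb M v hM hv
    obtain ⟨w1, h1⟩ := ha v hM hv
    obtain ⟨w2, h2⟩ := hb v hM hv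
    exact ⟨w1 + w2, by rw [Preadditive.comp_add, h1, h2]⟩
  zero_mem' := by
    intro M v hM hv
    exact ⟨0, by simp⟩
  smul_mem' := by
    intro c a ha M v hM hv
    obtain ⟨w, h⟩ := ha v hM hv
    exact ⟨c • w, by rw [Linear.comp_smul, h]⟩

/-- The projectively trivial morphisms form an `R`-submodule of `Hom(X, Y)`. -/
def PTrivSub (P : C → Prop) (X Y : C) : Submodule R (X ⟶ Y) where
  carrier := {u | PTriv P u}
  add_mem' := by
    intro a b ha hb M v hM hv
    obtain ⟨w1, h1⟩ := ha v hM hv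
    obtain ⟨w2, h2⟩ := hb v hM hv
    exact ⟨w1 + w2, by rw [Preadditive.add_comp, h1, h2]⟩
  zero_mem' := by
    intro M v hM hv
    exact ⟨0, by simp⟩
  smul_mem' := by
    intro c a ha M v hM hv
    obtain ⟨w, h⟩ := ha v hM hv
    exact ⟨c • w, by rw [Linear.smul_comp, h]⟩

/-- Morphism module of the injectively stable category `Ā`. -/
abbrev HomBar (P : C → Prop) (X Y : C) := (X ⟶ Y) ⧸ ITrivSub R P X Y

/-- Morphism module of the projectively stable category `A̲`. -/
abbrev HomUnder (P : C → Prop) (X Y : C) := (X ⟶ Y) ⧸ PTrivSub R P X Y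

end Linear

/-- An axiomatization of the bifunctor `Ext¹` of the exact subcategory `P` (equivalence
classes of short exact sequences in `P` under Baer sum), with its `R`-module structure,
pushout and pullback actions. -/
structure ExtTheory (P : C → Prop) : Type (max u (v + 1)) where
  ext : C → C → ModuleCat.{v} R
  push : ∀ {Z X X' : C}, (X ⟶ X') → (ext Z X ⟶ ext Z X')
  pull : ∀ {Z' Z X : C}, (Z' ⟶ Z) → (ext Z X ⟶ ext Z' X)
  push_id : ∀ (Z X : C), push (Z := Z) (𝟙 X) = 𝟙 (ext Z X)
  push_comp : ∀ {Z X X' X'' : C} (u : X ⟶ X') (v : X' ⟶ X''),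
    push (Z := Z) (u ≫ v) = push u ≫ push v
  pull_id : ∀ (Z X : C), pull (X := X) (𝟙 Z) = 𝟙 (ext Z X)
  pull_comp : ∀ {Z'' Z' Z X : C} (u : Z'' ⟶ Z') (v : Z' ⟶ Z),
    pull (X := X) (u ≫ v) = pull v ≫ pull u
  push_pull : ∀ {Z' Z X X' : C} (u : X ⟶ X') (v : Z' ⟶ Z),
    push u ≫ pull v = pull v ≫ push (Z := Z') u
  ofSES : ∀ {X Y Z : C} (f : X ⟶ Y) (g : Y ⟶ Z) (w : f ≫ g = 0),
    (ShortComplex.mk f g w).ShortExact → P X → P Y → P Z → ext Z X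
  ofSES_eq_zero_iff : ∀ {X Y Z : C} (f : X ⟶ Y) (g : Y ⟶ Z) (w : f ≫ g = 0)
    (hse : (ShortComplex.mk f g w).ShortExact) (hX : P X) (hY : P Y) (hZ : P Z),
    ofSES f g w hse hX hY hZ = 0 ↔ IsSection f
  ofSES_surj : ∀ {Z X : C} (hZ : P Z) (hX : P X) (e : ext Z X),
    ∃ (Y : C) (f : X ⟶ Y) (g : Y ⟶ Z) (w : f ≫ g = 0)
      (hse : (ShortComplex.mk f g w).ShortExact) (hY : P Y),
      ofSES f g w hse hX hY hZ = e
  push_ofSES : ∀ {X Y Z X' Y' : C} (f : X ⟶ Y) (g : Y ⟶ Z) (w : f ≫ g = 0)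
    (hse : (ShortComplex.mk f g w).ShortExact) (hX : P X) (hY : P Y) (hZ : P Z)
    (f' : X' ⟶ Y') (g' : Y' ⟶ Z) (w' : f' ≫ g' = 0)
    (hse' : (ShortComplex.mk f' g' w').ShortExact) (hX' : P X') (hY' : P Y')
    (u : X ⟶ X') (vv : Y ⟶ Y'), f ≫ vv = u ≫ f' → vv ≫ g' = g →
    push u (ofSES f g w hse hX hY hZ) = ofSES f' g' w' hse' hX' hY' hZ
  pull_ofSES : ∀ {X Y Z Y' Z' : C} (f : X ⟶ Y) (g : Y ⟶ Z) (w : f ≫ g = 0)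
    (hse : (ShortComplex.mk f g w).ShortExact) (hX : P X) (hY : P Y) (hZ : P Z)
    (f' : X ⟶ Y') (g' : Y' ⟶ Z') (w' : f' ≫ g' = 0)
    (hse' : (ShortComplex.mk f' g' w').ShortExact) (hY' : P Y') (hZ' : P Z')
    (t : Z' ⟶ Z) (vv : Y' ⟶ Y), f' ≫ vv = f → g' ≫ t = vv ≫ g →
    pull t (ofSES f g w hse hX hY hZ) = ofSES f' g' w' hse' hX hY' hZ'

/-- A cogenerator of `Mod R`. -/
def IsCogenerator (I : Type v) [AddCommGroup I] [Module R I] : Prop :=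
  ∀ (M : Type v) [AddCommGroup M] [Module R M] (m : M), m ≠ 0 → ∃ φ : M →ₗ[R] I, φ m ≠ 0

/-- The minimal injective cogenerator of `Mod R`: an injective cogenerator embedding
into every injective cogenerator. -/
def IsMinimalInjectiveCogenerator (I : Type v) [AddCommGroup I] [Module R I] : Prop :=
  Module.Injective R I ∧ IsCogenerator R I ∧
    ∀ (J : Type v) [AddCommGroup J] [Module R J], Module.Injective R J →
      IsCogenerator R J → ∃ ι : I →ₗ[R] J, Function.Injective ι

end AlmostSplit
namespace AlmostSplit

variable {C : Type u} [Category.{v} C] [Abelian C]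

/-- `M` is a (nonzero or zero) Krull-Schmidt object: a finite direct sum of objects with
local endomorphism rings. -/
def KSObject (M : C) : Prop :=
  ∃ (n : ℕ) (Xi : Fin n → C) (_ : M ≅ ⨁ Xi), ∀ i, IsLocalRing (End (Xi i))

/-- The exact subcategory `P` has right almost split sequences. -/
def HasRightASS (P : C → Prop) : Prop :=
  ∀ ⦃Z : C⦄, P Z → Indec Z → ¬ ExtProjective P Z →
    ∃ (X Y : C) (f : X ⟶ Y) (g : Y ⟶ Z) (w : f ≫ g = 0)
      (_ : (ShortComplex.mk f g w).ShortExact), P X ∧ P Y ∧ AlmostSplitSeq P f g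

/-- The exact subcategory `P` has left almost split sequences. -/
def HasLeftASS (P : C → Prop) : Prop :=
  ∀ ⦃X : C⦄, P X → Indec X → ¬ ExtInjective P X →
    ∃ (Y Z : C) (f : X ⟶ Y) (g : Y ⟶ Z) (w : f ≫ g = 0)
      (_ : (ShortComplex.mk f g w).ShortExact), P Y ∧ P Z ∧ AlmostSplitSeq P f g

/-- `f : M ⟶ X` is a right injectively stable `Q`-approximation of `X`, relative to the
ambient exact subcategory `P`. -/
def RightInjStableApprox (P Q : C → Prop) {M X : C} (f : M ⟶ X) : Prop :=
  Q M ∧ ∀ ⦃L : C⦄, Q L → ∀ h : L ⟶ X, ∃ u : L ⟶ M, ITriv P (h - u ≫ f)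

/-- The image of `f` in the injectively stable category is right minimal. -/
def RightMinimalBar (P : C → Prop) {M X : C} (f : M ⟶ X) : Prop :=
  ∀ h : M ⟶ M, ITriv P (h ≫ f - f) →
    ∃ h' : M ⟶ M, ITriv P (h ≫ h' - 𝟙 M) ∧ ITriv P (h' ≫ h - 𝟙 M)

/-- Minimal right injectively stable `Q`-approximation. -/
def MinRightInjStableApprox (P Q : C → Prop) {M X : C} (f : M ⟶ X) : Prop :=
  RightInjStableApprox P Q f ∧ RightMinimalBar P f ∧
    ∀ (N : C) (u : N ⟶ M) (r : M ⟶ N), u ≫ r = 𝟙 N → ExtInjective P N → IsZero N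

/-- `g : X ⟶ N` is a left projectively stable `Q`-approximation of `X`. -/
def LeftProjStableApprox (P Q : C → Prop) {X N : C} (g : X ⟶ N) : Prop :=
  Q N ∧ ∀ ⦃L : C⦄, Q L → ∀ h : X ⟶ L, ∃ u : N ⟶ L, PTriv P (h - g ≫ u)

/-- The image of `g` in the projectively stable category is left minimal. -/
def LeftMinimalUnder (P : C → Prop) {X N : C} (g : X ⟶ N) : Prop :=
  ∀ h : N ⟶ N, PTriv P (g ≫ h - g) →
    ∃ h' : N ⟶ N, PTriv P (h ≫ h' - 𝟙 N) ∧ PTriv P (h' ≫ h - 𝟙 N)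

/-- Minimal left projectively stable `Q`-approximation. -/
def MinLeftProjStableApprox (P Q : C → Prop) {X N : C} (g : X ⟶ N) : Prop :=
  LeftProjStableApprox P Q g ∧ LeftMinimalUnder P g ∧
    ∀ (L : C) (u : L ⟶ N) (r : N ⟶ L), u ≫ r = 𝟙 L → ExtProjective P L → IsZero L

end AlmostSplit
namespace AlmostSplit

section PushoutSES

variable {C : Type u} [Category.{v} C] [Abelian C]

/-- Pushing out a short exact sequence `0 → L → M → N → 0` along `h : L ⟶ X` yields a
short exact sequence `0 → X → Q → N → 0`. -/
lemma pushout_shortExact {L M N X : C} (v : L ⟶ M) (q : M ⟶ N) (w : v ≫ q = 0)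
    (hse : (ShortComplex.mk v q w).ShortExact) (h : L ⟶ X) :
    (ShortComplex.mk (pushout.inr v h)
      (pushout.desc q 0 (by rw [w, comp_zero]))
      (pushout.inr_desc _ _ _)).ShortExact := by
  have hmv : Mono v := hse.mono_f
  have hqe : Epi q := hse.epi_g
  set Q := pushout v h with hQ
  set g' : Q ⟶ N := pushout.desc q 0 (by rw [w, comp_zero]) with hg'
  have hinl : pushout.inl v h ≫ g' = q := pushout.inl_desc _ _ _
  have hinr : pushout.inr v h ≫ g' = 0 := pushout.inr_desc _ _ _
  have hmono : Mono (pushout.inr v h) := Abelian.mono_pushout_of_mono_f v h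
  have hepi : Epi g' := epi_of_epi_fac hinl
  -- the canonical epimorphism `M ⊞ X ⟶ Q`
  set π : M ⊞ X ⟶ Q := biprod.desc (pushout.inl v h) (pushout.inr v h) with hπ
  have hπepi : Epi π := by
    constructor
    intro T a b hab
    apply pushout.hom_ext
    · have := biprod.inl ≫= hab
      simpa [hπ] using this
    · have := biprod.inr ≫= hab
      simpa [hπ] using this
  have hπg' : π ≫ g' = biprod.fst ≫ q := by
    apply biprod.hom_ext'
    · simp [hπ, hinl]
    · simp [hπ, hinr]
  refine ShortComplex.ShortExact.mk' ?_ hmono hepi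
  apply ShortComplex.exact_of_f_is_kernel
  refine KernelFork.IsLimit.ofι' _ _ (fun {T} k hk => ?_)
  -- pull back `k` along the epimorphism `π`
  have hsndepi : Epi (pullback.snd π k) := Abelian.epi_pullback_of_epi_f π k
  have h1 : (pullback.fst π k ≫ biprod.fst) ≫ q = 0 := by
    rw [Category.assoc, ← hπg', ← Category.assoc, pullback.condition,
      Category.assoc, hk, comp_zero]
  obtain ⟨l, hl⟩ := KernelFork.IsLimit.lift' hse.fIsKernel _ h1
  dsimp at hl
  set m : pullback π k ⟶ X := l ≫ h + pullback.fst π k ≫ biprod.snd with hm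
  have key : m ≫ pushout.inr v h = pullback.snd π k ≫ k := by
    rw [hm, Preadditive.add_comp, Category.assoc, ← pushout.condition,
      ← Category.assoc, hl, ← pullback.condition]
    rw [Category.assoc, Category.assoc, hπ]
    rw [biprod.desc_eq, Preadditive.comp_add]
  have hker : kernel.ι (pullback.snd π k) ≫ m = 0 := by
    rw [← cancel_mono (pushout.inr v h), Category.assoc, key, zero_comp,
      ← Category.assoc, kernel.condition, zero_comp]
  refine ⟨Abelian.epiDesc (pullback.snd π k) m hker, ?_⟩
  rw [← cancel_epi (pullback.snd π k), ← Category.assoc,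
    Abelian.comp_epiDesc, key]

end PushoutSES

/-- Gabriel–Roiter; Proposition 2.2(1): if `δ : 0 → X → Y → Z → 0` is an
almost split sequence in the exact category given by `P` and `φ` is an `R`-linear form on
`Ext¹(Z, X)` with `φ(δ) ≠ 0`, then for every object `L` of the exact category, the bilinear
form `Hom_Ā(L, X) × Ext¹(Z, L) → I, (f̄, η) ↦ φ(f·η)` is non-degenerate. -/
theorem stmt8 {R : Type v} [CommRing R] {C : Type u} [Category.{v} C] [Abelian C]
    [Linear R C] (P : C → Prop) (hP : ExtClosed P) (E : ExtTheory R P)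
    (I : Type v) [AddCommGroup I] [Module R I]
    (hInj : Module.Injective R I) (hCog : IsCogenerator R I)
    {X Y Z : C} (f : X ⟶ Y) (g : Y ⟶ Z) (w : f ≫ g = 0)
    (hse : (ShortComplex.mk f g w).ShortExact) (hX : P X) (hY : P Y) (hZ : P Z)
    (hass : AlmostSplitSeq P f g)
    (φ : ↥(E.ext Z X) →ₗ[R] I) (hφ : φ (E.ofSES f g w hse hX hY hZ) ≠ 0)
    (L : C) (hL : P L) :
    (∀ h : L ⟶ X, ¬ ITriv P h → ∃ η : E.ext Z L, φ (E.push h η) ≠ 0) ∧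
    (∀ η : E.ext Z L, η ≠ 0 → ∃ h : L ⟶ X, φ (E.push h η) ≠ 0) := by
  constructor
  · -- non-degeneracy in the first variable
    intro h hnot
    simp only [ITriv, not_forall] at hnot
    obtain ⟨M, v, hM, hadm, hnofac⟩ := hnot
    obtain ⟨N, q, wq, hseq, hN⟩ := hadm
    -- push out the admissible mono `v` along `h`
    have hseT := pushout_shortExact v q wq hseq h
    set g' : pushout v h ⟶ N := pushout.desc q 0 (by rw [wq, comp_zero]) with hg'
    have hQ : P (pushout v h) := hP (pushout.inr v h) g' (pushout.inr_desc _ _ _) hseT hX hN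
    set ε := E.ofSES v q wq hseq hL hM hN with hε
    set τ := E.ofSES (pushout.inr v h) g' (pushout.inr_desc _ _ _) hseT hX hQ hN with hτ
    have hpush : E.push h ε = τ :=
      E.push_ofSES v q wq hseq hL hM hN (pushout.inr v h) g' (pushout.inr_desc _ _ _) hseT hX hQ
        h (pushout.inl v h) pushout.condition (pushout.inl_desc _ _ _)
    -- `pushout.inr v h` is not a section since `h` does not factor through `v`
    have hnosec : ¬ IsSection (pushout.inr v h) := by
      rintro ⟨r, hr⟩
      exact hnofac ⟨pushout.inl v h ≫ r, by
        rw [← Category.assoc, pushout.condition, Category.assoc, hr, Category.comp_id]⟩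
    -- use that `f` is left almost split
    obtain ⟨t, ht⟩ := hass.1.2 hQ (pushout.inr v h) hnosec
    -- induced morphism on cokernels
    have hcond : f ≫ (t ≫ g') = 0 := by
      rw [← Category.assoc, ht]
      exact pushout.inr_desc _ _ _
    obtain ⟨s, hs⟩ := CokernelCofork.IsColimit.desc' hse.gIsCokernel (t ≫ g') hcond
    dsimp at hs
    have hpull : E.pull s τ = E.ofSES f g w hse hX hY hZ :=
      E.pull_ofSES (pushout.inr v h) g' (pushout.inr_desc _ _ _) hseT hX hQ hN
        f g w hse hY hZ s t ht hs
    have hcomm := congrArg (fun (ψ : E.ext N L ⟶ E.ext Z X) => ψ ε) (E.push_pull h s)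
    have hcomm' : (E.pull s) ((E.push h) ε) = (E.push h) ((E.pull s) ε) := hcomm
    refine ⟨E.pull s ε, fun h0 => hφ ?_⟩
    have e1 : E.ofSES f g w hse hX hY hZ = (E.push h) ((E.pull s) ε) := by
      rw [← hpull, ← hpush]; exact hcomm'
    rw [e1]; exact h0
  · -- non-degeneracy in the second variable
    intro η hη
    obtain ⟨M', i, p, wip, hsei, hM', heq⟩ := E.ofSES_surj hZ hL η
    have hnosec : ¬ IsSection i := by
      intro hs
      exact hη (heq ▸ (E.ofSES_eq_zero_iff i p wip hsei hL hM' hZ).mpr hs)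
    -- `p` is not a retraction (otherwise the sequence splits)
    have hpnotret : ¬ IsRetraction p := by
      rintro ⟨s, hsp⟩
      apply hnosec
      have hcomp : (𝟙 M' - p ≫ s) ≫ p = 0 := by
        rw [Preadditive.sub_comp, Category.id_comp, Category.assoc, hsp, Category.comp_id,
          sub_self]
      obtain ⟨r, hr⟩ := KernelFork.IsLimit.lift' hsei.fIsKernel _ hcomp
      dsimp at hr
      have := hsei.mono_f
      refine ⟨r, ?_⟩
      rw [← cancel_mono i, Category.assoc, hr, Preadditive.comp_sub, Category.comp_id,
        ← Category.assoc, wip, zero_comp, sub_zero, Category.id_comp]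
    -- use that `g` is right almost split
    obtain ⟨t, ht⟩ := hass.2.2.1.2 hM' p hpnotret
    -- induced morphism on kernels
    have hcond : (i ≫ t) ≫ g = 0 := by rw [Category.assoc, ht, wip]
    obtain ⟨hmap, hh⟩ := KernelFork.IsLimit.lift' hse.fIsKernel (i ≫ t) hcond
    dsimp at hh
    have hpush : E.push hmap (E.ofSES i p wip hsei hL hM' hZ) =
        E.ofSES f g w hse hX hY hZ :=
      E.push_ofSES i p wip hsei hL hM' hZ f g w hse hX hY hmap t hh.symm ht
    refine ⟨hmap, fun h0 => hφ ?_⟩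
    rw [← hpush, heq]
    exact h0

end AlmostSplit
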